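/- Let P̂_n be the empirical distribution (type) of n i.i.d. samples from a distribution P on an alphabet of size m with full support. Then n·E[D(P̂_n ‖ P)] = ((m-1)/2)·log e + o(1) as n → ∞, where D is the Kullback–Leibler divergence. -/

import Mathlib

open Real BigOperators Finset Filter

/-- Empirical distribution (type) of the sample x : Fin n → α. -/
noncomputable def empDist {α : Type*} [Fintype α] [DecidableEq α]
    (n : ℕ) (x : Fin n → α) : α → ℝ :=
  fun a => ((univ.filter (fun i => x i = a)).card : ℝ) / n

/-- Kullback–Leibler divergence (natural log) between pmfs on a finite set. -/
noncomputable def klDiv' {α : Type*} [Fintype α] (Q P : α → ℝ) : ℝ :=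
  ∑ a, Q a * Real.log (Q a / P a)

/-- Expected divergence of the empirical distribution of n i.i.d. samples from P. -/
noncomputable def expKL {α : Type*} [Fintype α] [DecidableEq α]
    (P : α → ℝ) (n : ℕ) : ℝ :=
  ∑ x : Fin n → α, (∏ i, P (x i)) * klDiv' (empDist n x) P

private lemma D_nonneg {x : ℝ} (hx : 0 < x) : 0 ≤ (x - 1) - Real.log x :=
  sub_nonneg.2 (Real.log_le_sub_one_of_pos hx)

private lemma D_ub {x : ℝ} (hx : 0 < x) : (x - 1) - Real.log x ≤ (x - 1)^2 / x := by
  have h : Real.log x⁻¹ ≤ x⁻¹ - 1 := Real.log_le_sub_one_of_pos (inv_pos.2 hx)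
  rw [Real.log_inv] at h
  have hx' : x ≠ 0 := ne_of_gt hx
  have heq : (x - 1)^2 / x = (x - 1) + (x⁻¹ - 1) := by field_simp; ring
  linarith


private lemma hasDerivAt_sub_one (x : ℝ) : HasDerivAt (fun y : ℝ => y - 1) 1 x :=
  (hasDerivAt_id x).sub_const 1

private lemma hasDerivAt_F {x : ℝ} (hx : x ≠ 0) :
    HasDerivAt (fun y => y * Real.log y - (y - 1) - (y - 1)^2 / 2)
      (Real.log x - (x - 1)) x := by
  have h1 := Real.hasDerivAt_mul_log hx
  have h2 : HasDerivAt (fun y : ℝ => y - 1) 1 x := (hasDerivAt_id x).sub_const 1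
  have h3 : HasDerivAt (fun y : ℝ => (y - 1)^2 / 2) (x - 1) x := by
    have := (h2.fun_pow 2).div_const 2
    exact this.congr_deriv (by ring)
  have := (h1.fun_sub h2).fun_sub h3
  exact this.congr_deriv (by ring)

private lemma h1_mono : MonotoneOn
    (fun x : ℝ => (x - 1)^3 - (x * Real.log x - (x - 1) - (x - 1)^2 / 2))
    (Set.Ici (1/2 : ℝ)) := by
  apply monotoneOn_of_deriv_nonneg (convex_Ici _)
  · apply ContinuousOn.sub (by fun_prop)
    apply ContinuousOn.sub (ContinuousOn.sub ?_ (by fun_prop)) (by fun_prop)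
    exact ContinuousOn.mul (by fun_prop) (Real.continuousOn_log.mono (by
      intro x hx; simp only [Set.mem_Ici] at hx; simp; linarith))
  · intro x hx
    rw [interior_Ici] at hx
    simp only [Set.mem_Ioi] at hx
    have hx0 : x ≠ 0 := by positivity
    have hd : HasDerivAt (fun x : ℝ => (x - 1)^3 - (x * Real.log x - (x - 1) - (x - 1)^2 / 2))
        (3*(x-1)^2 - (Real.log x - (x - 1))) x := by
      have hp : HasDerivAt (fun y : ℝ => (y - 1)^3) (3*(x-1)^2) x := by
        have := (hasDerivAt_sub_one x).fun_pow 3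
        exact this.congr_deriv (by ring)
      exact hp.sub (hasDerivAt_F hx0)
    exact hd.differentiableAt.differentiableWithinAt
  · intro x hx
    rw [interior_Ici] at hx
    simp only [Set.mem_Ioi] at hx
    have hx0' : (0:ℝ) < x := by linarith
    have hx0 : x ≠ 0 := ne_of_gt hx0'
    have hd : HasDerivAt (fun x : ℝ => (x - 1)^3 - (x * Real.log x - (x - 1) - (x - 1)^2 / 2))
        (3*(x-1)^2 - (Real.log x - (x - 1))) x := by
      have hp : HasDerivAt (fun y : ℝ => (y - 1)^3) (3*(x-1)^2) x := by
        have := (hasDerivAt_sub_one x).fun_pow 3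
        exact this.congr_deriv (by ring)
      exact hp.sub (hasDerivAt_F hx0)
    rw [hd.deriv]
    have := D_nonneg hx0'
    nlinarith [sq_nonneg (x-1)]

private lemma h2_mono : MonotoneOn
    (fun x : ℝ => (x * Real.log x - (x - 1) - (x - 1)^2 / 2) + 2*(x - 1)^3)
    (Set.Ici (1/2 : ℝ)) := by
  apply monotoneOn_of_deriv_nonneg (convex_Ici _)
  · apply ContinuousOn.add ?_ (by fun_prop)
    apply ContinuousOn.sub (ContinuousOn.sub ?_ (by fun_prop)) (by fun_prop)
    exact ContinuousOn.mul (by fun_prop) (Real.continuousOn_log.mono (by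
      intro x hx; simp only [Set.mem_Ici] at hx; simp; linarith))
  · intro x hx
    rw [interior_Ici] at hx
    simp only [Set.mem_Ioi] at hx
    have hx0 : x ≠ 0 := by positivity
    have hd : HasDerivAt (fun x : ℝ => (x * Real.log x - (x - 1) - (x - 1)^2 / 2) + 2*(x - 1)^3)
        ((Real.log x - (x - 1)) + 2*(3*(x-1)^2)) x := by
      have hp : HasDerivAt (fun y : ℝ => 2*(y - 1)^3) (2*(3*(x-1)^2)) x := by
        have := ((hasDerivAt_sub_one x).fun_pow 3).const_mul 2
        exact this.congr_deriv (by ring)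
      exact (hasDerivAt_F hx0).add hp
    exact hd.differentiableAt.differentiableWithinAt
  · intro x hx
    rw [interior_Ici] at hx
    simp only [Set.mem_Ioi] at hx
    have hx0' : (0:ℝ) < x := by linarith
    have hx0 : x ≠ 0 := ne_of_gt hx0'
    have hd : HasDerivAt (fun x : ℝ => (x * Real.log x - (x - 1) - (x - 1)^2 / 2) + 2*(x - 1)^3)
        ((Real.log x - (x - 1)) + 2*(3*(x-1)^2)) x := by
      have hp : HasDerivAt (fun y : ℝ => 2*(y - 1)^3) (2*(3*(x-1)^2)) x := by
        have := ((hasDerivAt_sub_one x).fun_pow 3).const_mul 2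
        exact this.congr_deriv (by ring)
      exact (hasDerivAt_F hx0).add hp
    rw [hd.deriv]
    have h1 := D_ub hx0'
    have h2 : (x-1)^2 / x ≤ 2*(x-1)^2 := by
      rw [div_le_iff₀ hx0']
      nlinarith [sq_nonneg (x-1)]
    nlinarith [sq_nonneg (x-1)]

/-- Key bound: |x log x - (x-1) - (x-1)²/2| ≤ 2|x-1|³ for x ≥ 1/2. -/
private lemma F_bound {x : ℝ} (hx : 1/2 ≤ x) :
    |x * Real.log x - (x - 1) - (x - 1)^2 / 2| ≤ 2 * |x - 1|^3 := by
  have hmem : x ∈ Set.Ici (1/2 : ℝ) := hx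
  have hmem1 : (1:ℝ) ∈ Set.Ici (1/2 : ℝ) := by norm_num
  rw [abs_le]
  rcases le_total 1 x with h | h
  · have e1 := h1_mono hmem1 hmem h
    have e2 := h2_mono hmem1 hmem h
    rw [abs_of_nonneg (by linarith)]
    simp only [Real.log_one] at e1 e2
    constructor <;> nlinarith
  · have e1 := h1_mono hmem hmem1 h
    have e2 := h2_mono hmem hmem1 h
    rw [abs_of_nonpos (by linarith)]
    simp only [Real.log_one] at e1 e2
    constructor <;> nlinarith

private lemma R_lb {p q : ℝ} (hp : 0 < p) (hq : 0 ≤ q) :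
    0 ≤ q * Real.log (q / p) - (q - p) := by
  rcases eq_or_lt_of_le hq with h | h
  · simp [← h]; linarith
  · have h1 : Real.log (p / q) ≤ p / q - 1 := Real.log_le_sub_one_of_pos (by positivity)
    have h2 : Real.log (p / q) = - Real.log (q / p) := by
      rw [← Real.log_inv]; congr 1; rw [inv_div]
    rw [h2] at h1
    have h3 : q * (1 - p / q) ≤ q * Real.log (q / p) :=
      mul_le_mul_of_nonneg_left (by linarith) hq
    have h4 : q * (1 - p / q) = q - p := by field_simp
    linarith

private lemma R_ub {p q : ℝ} (hp : 0 < p) (hq : 0 ≤ q) (hqp : q ≤ p) :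
    q * Real.log (q / p) - (q - p) ≤ p := by
  have h1 : Real.log (q / p) ≤ 0 :=
    Real.log_nonpos (by positivity) (by rw [div_le_one hp]; exact hqp)
  have h2 : q * Real.log (q / p) ≤ 0 := mul_nonpos_of_nonneg_of_nonpos hq h1
  linarith

private lemma S_bound {p q : ℝ} (hp : 0 < p) (hp1 : p ≤ 1) (hq : 0 ≤ q) (hq1 : q ≤ 1) :
    |q * Real.log (q / p) - (q - p) - (q - p)^2 / (2*p)| ≤
      2 / p^2 * |q - p|^3 + (p + 1/(2*p)) * (16 / p^4) * (q - p)^4 := by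
  rcases le_or_gt (p/2) q with hcase | hcase
  · -- q ≥ p/2 : use F_bound with x = q/p
    have hx : 1/2 ≤ q / p := by
      rw [le_div_iff₀ hp]; linarith
    have key := F_bound hx
    have e1 : q * Real.log (q/p) - (q - p) - (q - p)^2/(2*p)
        = p * ((q/p) * Real.log (q/p) - (q/p - 1) - (q/p - 1)^2/2) := by
      field_simp
    have e2 : |q/p - 1| = |q - p| / p := by
      rw [show q/p - 1 = (q - p)/p by field_simp, abs_div, abs_of_pos hp]
    have e3 : |p * ((q/p) * Real.log (q/p) - (q/p - 1) - (q/p - 1)^2/2)|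
        = p * |(q/p) * Real.log (q/p) - (q/p - 1) - (q/p - 1)^2/2| := by
      rw [abs_mul, abs_of_pos hp]
    have step : p * |(q/p) * Real.log (q/p) - (q/p - 1) - (q/p - 1)^2/2|
        ≤ p * (2 * (|q - p| / p)^3) := by
      apply mul_le_mul_of_nonneg_left _ hp.le
      rw [← e2]; exact key
    have e4 : p * (2 * (|q - p| / p)^3) = 2 / p^2 * |q - p|^3 := by
      field_simp
    have hnn : 0 ≤ (p + 1/(2*p)) * (16 / p^4) * (q - p)^4 := by positivity
    rw [e1, e3]
    calc p * |(q/p) * Real.log (q/p) - (q/p - 1) - (q/p - 1)^2/2|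
        ≤ 2 / p^2 * |q - p|^3 := by rw [← e4]; exact step
      _ ≤ _ := by linarith
  · -- q < p/2 : crude bound via indicator
    have hqp : q ≤ p := by linarith
    have hR0 := R_lb hp hq
    have hRp := R_ub hp hq hqp
    have hsq : (q - p)^2 ≤ 1 := by nlinarith
    have hc1 : (q - p)^2/(2*p) ≤ 1/(2*p) :=
      div_le_div_of_nonneg_right ?_ (by linarith) |>.trans_eq rfl
    case _ =>
      have habs : |q * Real.log (q / p) - (q - p) - (q - p)^2 / (2*p)| ≤ p + 1/(2*p) := by
        have hc0 : 0 ≤ (q - p)^2/(2*p) := by positivity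
        rw [abs_le]; constructor <;> [linarith; linarith]
      have h5 : p/2 ≤ p - q := by linarith
      have h6 : (p/2)^4 ≤ (p - q)^4 := pow_le_pow_left₀ (by linarith) h5 4
      have h7 : (q - p)^4 = (p - q)^4 := by ring
      have h8 : (1:ℝ) ≤ (16 / p^4) * (q - p)^4 := by
        rw [h7]
        have : (16 / p^4) * (p/2)^4 ≤ (16 / p^4) * (p - q)^4 :=
          mul_le_mul_of_nonneg_left h6 (by positivity)
        have he : (16 / p^4) * (p/2)^4 = 1 := by field_simp; ring
        linarith
      have h9 : (p + 1/(2*p)) * 1 ≤ (p + 1/(2*p)) * ((16 / p^4) * (q - p)^4) :=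
        mul_le_mul_of_nonneg_left h8 (by positivity)
      have h10 : 0 ≤ 2 / p^2 * |q - p|^3 := by positivity
      calc |q * Real.log (q / p) - (q - p) - (q - p)^2 / (2*p)|
          ≤ p + 1/(2*p) := habs
        _ ≤ (p + 1/(2*p)) * ((16 / p^4) * (q - p)^4) := by linarith
        _ = (p + 1/(2*p)) * (16 / p^4) * (q - p)^4 := by ring
        _ ≤ _ := by linarith
    exact hsq

open Polynomial in
private lemma binom_fact (p : ℝ) (n r : ℕ) :
    ∑ k ∈ range (n+1), (Nat.descFactorial k r : ℝ) * (n.choose k : ℝ) * p^k * (1-p)^(n-k)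
      = (Nat.descFactorial n r : ℝ) * p^r := by
  have hb : ((X + C (1-p))^n : ℝ[X])
      = ∑ k ∈ range (n+1), C ((n.choose k : ℝ) * (1-p)^(n-k)) * X^k := by
    rw [add_pow]
    refine Finset.sum_congr rfl fun k _ => ?_
    rw [C_mul, ← C_pow, ← Polynomial.C_eq_natCast]
    ring
  have h1 : Polynomial.eval p (derivative^[r] ((X + C (1-p))^n : ℝ[X]))
      = (Nat.descFactorial n r : ℝ) := by
    rw [iterate_derivative_X_add_pow]
    simp
  have h2 : Polynomial.eval p (derivative^[r] ((X + C (1-p))^n : ℝ[X]))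
      = ∑ k ∈ range (n+1),
          (n.choose k : ℝ) * (1-p)^(n-k) * ((Nat.descFactorial k r : ℝ) * p^(k-r)) := by
    rw [hb, iterate_derivative_sum]
    rw [Polynomial.eval_finset_sum]
    refine Finset.sum_congr rfl fun k _ => ?_
    rw [iterate_derivative_C_mul, iterate_derivative_X_pow_eq_C_mul]
    simp [mul_assoc]
  have key : ∑ k ∈ range (n+1),
      (n.choose k : ℝ) * (1-p)^(n-k) * ((Nat.descFactorial k r : ℝ) * p^(k-r))
      = (Nat.descFactorial n r : ℝ) := by rw [← h2, h1]
  have : ∑ k ∈ range (n+1), (Nat.descFactorial k r : ℝ) * (n.choose k : ℝ) * p^k * (1-p)^(n-k)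
      = (∑ k ∈ range (n+1),
          (n.choose k : ℝ) * (1-p)^(n-k) * ((Nat.descFactorial k r : ℝ) * p^(k-r))) * p^r := by
    rw [Finset.sum_mul]
    refine Finset.sum_congr rfl fun k _ => ?_
    rcases lt_or_ge k r with hk | hk
    · rw [Nat.descFactorial_eq_zero_iff_lt.2 hk]
      simp
    · have : p^(k-r) * p^r = p^k := by
        rw [← pow_add, Nat.sub_add_cancel hk]
      rw [← this]; ring
  rw [this, key]

private lemma df1 (k : ℕ) : (Nat.descFactorial k 1 : ℝ) = k := by
  rw [Nat.descFactorial_one]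

private lemma df2 (k : ℕ) : (Nat.descFactorial k 2 : ℝ) = k * (k - 1) := by
  cases k with
  | zero => simp
  | succ m => rw [Nat.descFactorial_succ, Nat.descFactorial_one]; push_cast; ring

private lemma df3 (k : ℕ) : (Nat.descFactorial k 3 : ℝ) = k * (k - 1) * (k - 2) := by
  match k with
  | 0 => simp
  | 1 => norm_num [Nat.descFactorial]
  | (l+2) =>
    rw [Nat.descFactorial_succ, Nat.cast_mul, df2]
    push_cast; ring

private lemma df4 (k : ℕ) : (Nat.descFactorial k 4 : ℝ) = k * (k - 1) * (k - 2) * (k - 3) := by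
  match k with
  | 0 => simp
  | 1 => norm_num [Nat.descFactorial]
  | 2 => norm_num [Nat.descFactorial]
  | (l+3) =>
    rw [Nat.descFactorial_succ, Nat.cast_mul, df3]
    push_cast; ring

section moments
variable (p : ℝ) (n : ℕ)

private noncomputable def W (p : ℝ) (n k : ℕ) : ℝ := (n.choose k : ℝ) * p^k * (1-p)^(n-k)

private lemma bf' (r : ℕ) :
    ∑ k ∈ range (n+1), W p n k * (Nat.descFactorial k r : ℝ)
      = (Nat.descFactorial n r : ℝ) * p^r := by
  rw [← binom_fact p n r]
  exact Finset.sum_congr rfl fun k _ => by unfold W; ring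

private lemma hA0 : ∑ k ∈ range (n+1), W p n k = 1 := by
  have := bf' p n 0
  simpa using this

private lemma hA1 : ∑ k ∈ range (n+1), W p n k * (k:ℝ) = n * p := by
  have := bf' p n 1
  simp only [df1] at this
  rw [this]; ring

private lemma hA2 : ∑ k ∈ range (n+1), W p n k * ((k:ℝ) * (k-1)) = n * (n-1) * p^2 := by
  have := bf' p n 2
  simp only [df2] at this
  rw [this]

private lemma hA3 : ∑ k ∈ range (n+1), W p n k * ((k:ℝ) * (k-1) * (k-2))
    = n * (n-1) * (n-2) * p^3 := by
  have := bf' p n 3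
  simp only [df3] at this
  rw [this]

private lemma hA4 : ∑ k ∈ range (n+1), W p n k * ((k:ℝ) * (k-1) * (k-2) * (k-3))
    = n * (n-1) * (n-2) * (n-3) * p^4 := by
  have := bf' p n 4
  simp only [df4] at this
  rw [this]

private lemma M1 : ∑ k ∈ range (n+1), W p n k * ((k:ℝ) - n*p) = 0 := by
  have e : ∀ k ∈ range (n+1), W p n k * ((k:ℝ) - n*p)
      = W p n k * (k:ℝ) - (n*p) * W p n k := fun k _ => by ring
  rw [Finset.sum_congr rfl e, Finset.sum_sub_distrib, ← Finset.mul_sum, hA1, hA0]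
  ring

private lemma M2 : ∑ k ∈ range (n+1), W p n k * ((k:ℝ) - n*p)^2 = n*p*(1-p) := by
  have e : ∀ k ∈ range (n+1), W p n k * ((k:ℝ) - n*p)^2
      = W p n k * ((k:ℝ) * (k-1)) + (1 - 2*n*p) * (W p n k * (k:ℝ))
        + (n*p)^2 * W p n k := fun k _ => by ring
  rw [Finset.sum_congr rfl e, Finset.sum_add_distrib, Finset.sum_add_distrib,
    ← Finset.mul_sum, ← Finset.mul_sum, hA0, hA1, hA2]
  ring

private lemma M4 : ∑ k ∈ range (n+1), W p n k * ((k:ℝ) - n*p)^4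
    = n*p*(1-p)*(1 + 3*((n:ℝ)-2)*p*(1-p)) := by
  have e : ∀ k ∈ range (n+1), W p n k * ((k:ℝ) - n*p)^4
      = W p n k * ((k:ℝ) * (k-1) * (k-2) * (k-3))
        + (6 - 4*(n*p)) * (W p n k * ((k:ℝ) * (k-1) * (k-2)))
        + (7 - 12*(n*p) + 6*(n*p)^2) * (W p n k * ((k:ℝ) * (k-1)))
        + (1 - 4*(n*p) + 6*(n*p)^2 - 4*(n*p)^3) * (W p n k * (k:ℝ))
        + (n*p)^4 * W p n k := fun k _ => by ring
  rw [Finset.sum_congr rfl e]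
  rw [Finset.sum_add_distrib, Finset.sum_add_distrib, Finset.sum_add_distrib,
    Finset.sum_add_distrib, ← Finset.mul_sum, ← Finset.mul_sum, ← Finset.mul_sum,
    ← Finset.mul_sum, hA0, hA1, hA2, hA3, hA4]
  ring

private lemma M4_le (hp : 0 ≤ p) (hp1 : p ≤ 1) (hn : 1 ≤ n) :
    ∑ k ∈ range (n+1), W p n k * ((k:ℝ) - n*p)^4 ≤ 3 * (n:ℝ)^2 := by
  rw [M4]
  have hn' : (1:ℝ) ≤ (n:ℝ) := by exact_mod_cast hn
  have hs : p * (1-p) ≤ 1/4 := by nlinarith [sq_nonneg (1 - 2*p)]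
  have hs0 : 0 ≤ p * (1-p) := by nlinarith
  nlinarith [mul_nonneg hs0 hs0, sq_nonneg ((n:ℝ) - 1), mul_le_mul hs hs hs0 (by norm_num : (0:ℝ) ≤ 1/4)]
end moments

private lemma pascal_step (p q' : ℝ) (n : ℕ) (f : ℕ → ℝ) :
    ∑ k ∈ range (n+2), ((n+1).choose k : ℝ) * p^k * q'^(n+1-k) * f k
      = p * ∑ k ∈ range (n+1), (n.choose k : ℝ) * p^k * q'^(n-k) * f (k+1)
        + q' * ∑ k ∈ range (n+1), (n.choose k : ℝ) * p^k * q'^(n-k) * f k := by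
  rw [Finset.sum_range_succ' _ (n+1)]
  have e1 : ∀ j ∈ range (n+1),
      ((n+1).choose (j+1) : ℝ) * p^(j+1) * q'^(n+1-(j+1)) * f (j+1)
        = (n.choose j : ℝ) * p^(j+1) * q'^(n-j) * f (j+1)
          + (n.choose (j+1) : ℝ) * p^(j+1) * q'^(n-j) * f (j+1) := by
    intro j _
    rw [Nat.choose_succ_succ, Nat.succ_sub_succ]
    push_cast
    ring
  rw [Finset.sum_congr rfl e1, Finset.sum_add_distrib]
  have e2 : ∑ j ∈ range (n+1), (n.choose j : ℝ) * p^(j+1) * q'^(n-j) * f (j+1)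
      = p * ∑ k ∈ range (n+1), (n.choose k : ℝ) * p^k * q'^(n-k) * f (k+1) := by
    rw [Finset.mul_sum]
    exact Finset.sum_congr rfl fun j _ => by rw [pow_succ]; ring
  have e3 : ∑ j ∈ range (n+1), (n.choose (j+1) : ℝ) * p^(j+1) * q'^(n-j) * f (j+1)
        + ((n+1).choose 0 : ℝ) * p^0 * q'^(n+1-0) * f 0
      = q' * ∑ k ∈ range (n+1), (n.choose k : ℝ) * p^k * q'^(n-k) * f k := by
    rw [Finset.sum_range_succ _ n, Nat.choose_succ_self, Finset.mul_sum,
      Finset.sum_range_succ' _ n]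
    have e4 : ∀ j ∈ range n, (n.choose (j+1) : ℝ) * p^(j+1) * q'^(n-j) * f (j+1)
        = q' * ((n.choose (j+1) : ℝ) * p^(j+1) * q'^(n-(j+1)) * f (j+1)) := by
      intro j hj
      rw [Finset.mem_range] at hj
      have : n - j = (n - (j+1)) + 1 := by omega
      rw [this, pow_succ]
      ring
    rw [Finset.sum_congr rfl e4]
    simp
    ring
  rw [← e2, ← e3]
  ring

private lemma margin {α : Type*} [Fintype α] [DecidableEq α] (P : α → ℝ)
    (hsum : ∑ a, P a = 1) (a : α) :
    ∀ (n : ℕ) (f : ℕ → ℝ),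
    ∑ x : Fin n → α, (∏ i, P (x i)) * f ((univ.filter fun i => x i = a).card)
      = ∑ k ∈ range (n+1), (n.choose k : ℝ) * (P a)^k * (1 - P a)^(n-k) * f k := by
  intro n
  induction n with
  | zero =>
    intro f
    simp
  | succ n ih =>
    intro f
    have cnt_succ : ∀ x : Fin (n+1) → α, (univ.filter fun i => x i = a).card
        = (if x 0 = a then 1 else 0) + (univ.filter fun i : Fin n => x i.succ = a).card := by
      intro x
      rw [Finset.card_filter, Finset.card_filter, Fin.sum_univ_succ]
    have reindex : ∑ x : Fin (n+1) → α, (∏ i, P (x i)) * f ((univ.filter fun i => x i = a).card)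
        = ∑ a0 : α, ∑ y : Fin n → α,
            (P a0 * ∏ i, P (y i)) * f ((if a0 = a then 1 else 0)
              + (univ.filter fun i => y i = a).card) := by
      have step1 : ∑ x : Fin (n+1) → α, (∏ i, P (x i)) * f ((univ.filter fun i => x i = a).card)
          = ∑ pr : α × (Fin n → α), (P pr.1 * ∏ i, P (pr.2 i)) * f ((if pr.1 = a then 1 else 0)
              + (univ.filter fun i => pr.2 i = a).card) := by
        apply Fintype.sum_equiv (Fin.consEquiv fun _ => α).symm
        intro x
        simp only [Fin.consEquiv_symm_apply, Fin.tail]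
        rw [Fin.prod_univ_succ, cnt_succ x]
      rw [step1, Fintype.sum_prod_type]
    rw [reindex]
    have inner : ∀ a0 : α, ∑ y : Fin n → α,
        (P a0 * ∏ i, P (y i)) * f ((if a0 = a then 1 else 0)
          + (univ.filter fun i => y i = a).card)
        = P a0 * ∑ k ∈ range (n+1), (n.choose k : ℝ) * (P a)^k * (1-P a)^(n-k)
            * f ((if a0 = a then 1 else 0) + k) := by
      intro a0
      rw [← ih (fun k => f ((if a0 = a then 1 else 0) + k)), Finset.mul_sum]
      exact Finset.sum_congr rfl fun y _ => by ring
    rw [Finset.sum_congr rfl (fun a0 _ => inner a0)]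
    rw [Finset.sum_eq_sum_sdiff_singleton_add (Finset.mem_univ a)]
    have hrest : ∑ a0 ∈ univ \ {a}, P a0 * ∑ k ∈ range (n+1),
        (n.choose k : ℝ) * (P a)^k * (1-P a)^(n-k) * f ((if a0 = a then 1 else 0) + k)
        = (1 - P a) * ∑ k ∈ range (n+1),
            (n.choose k : ℝ) * (P a)^k * (1-P a)^(n-k) * f k := by
      have h1 : ∀ a0 ∈ univ \ {a}, P a0 * ∑ k ∈ range (n+1),
          (n.choose k : ℝ) * (P a)^k * (1-P a)^(n-k) * f ((if a0 = a then 1 else 0) + k)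
          = P a0 * ∑ k ∈ range (n+1),
            (n.choose k : ℝ) * (P a)^k * (1-P a)^(n-k) * f k := by
        intro a0 ha0
        rw [Finset.mem_sdiff, Finset.mem_singleton] at ha0
        rw [if_neg ha0.2]
        simp
      rw [Finset.sum_congr rfl h1, ← Finset.sum_mul]
      have : ∑ a0 ∈ univ \ {a}, P a0 = 1 - P a := by
        have h2 := Finset.sum_eq_sum_sdiff_singleton_add (Finset.mem_univ a) P
        rw [hsum] at h2
        linarith
      rw [this]
    rw [hrest, if_pos rfl]
    rw [pascal_step (P a) (1 - P a) n f]
    have : ∀ k ∈ range (n+1), (n.choose k : ℝ) * (P a)^k * (1-P a)^(n-k) * f (1 + k)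
        = (n.choose k : ℝ) * (P a)^k * (1-P a)^(n-k) * f (k+1) := by
      intro k _; rw [add_comm 1 k]
    rw [Finset.sum_congr rfl this]
    ring

private lemma key_est (p : ℝ) (hp : 0 < p) (hp1 : p ≤ 1) {n : ℕ} (hn : 1 ≤ n) :
    |(∑ k ∈ range (n+1), W p n k * ((k:ℝ) * Real.log (((k:ℝ)/n)/p))) - (1-p)/2|
      ≤ 2/p^2 * (1/Real.sqrt n) + (3*((p + 1/(2*p))*(16/p^4))) * (1/n) := by
  have hn0 : (0:ℝ) < n := by exact_mod_cast hn
  have hne : (n:ℝ) ≠ 0 := ne_of_gt hn0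
  have hpne : p ≠ 0 := ne_of_gt hp
  have hw : ∀ k, 0 ≤ W p n k := fun k => by
    unfold W
    have h1p : (0:ℝ) ≤ 1 - p := by linarith
    positivity
  -- scaled moment sums
  have t1 : ∑ k ∈ range (n+1), W p n k * ((k:ℝ)/n - p) = 0 := by
    have e : ∀ k ∈ range (n+1), W p n k * ((k:ℝ)/n - p)
        = (1/n) * (W p n k * ((k:ℝ) - n*p)) := fun k _ => by first | (field_simp; ring) | field_simp
    rw [Finset.sum_congr rfl e, ← Finset.mul_sum, M1, mul_zero]
  have t2 : ∑ k ∈ range (n+1), W p n k * ((k:ℝ)/n - p)^2 = p*(1-p)/n := by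
    have e : ∀ k ∈ range (n+1), W p n k * ((k:ℝ)/n - p)^2
        = (1/n^2) * (W p n k * ((k:ℝ) - n*p)^2) := fun k _ => by first | (field_simp; ring) | field_simp
    rw [Finset.sum_congr rfl e, ← Finset.mul_sum, M2]
    field_simp
  have t4 : ∑ k ∈ range (n+1), W p n k * ((k:ℝ)/n - p)^4 ≤ 3/n^2 := by
    have e : ∀ k ∈ range (n+1), W p n k * ((k:ℝ)/n - p)^4
        = (1/n^4) * (W p n k * ((k:ℝ) - n*p)^4) := fun k _ => by first | (field_simp; ring) | field_simp
    rw [Finset.sum_congr rfl e, ← Finset.mul_sum]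
    have h4 := M4_le p n hp.le hp1 hn
    have hpos : (0:ℝ) < 1/(n:ℝ)^4 := by positivity
    calc (1/(n:ℝ)^4) * ∑ k ∈ range (n+1), W p n k * ((k:ℝ) - n*p)^4
        ≤ (1/(n:ℝ)^4) * (3*(n:ℝ)^2) := mul_le_mul_of_nonneg_left h4 hpos.le
      _ = 3/n^2 := by field_simp
  -- third absolute moment via Cauchy-Schwarz
  have t3 : ∑ k ∈ range (n+1), W p n k * |(k:ℝ)/n - p|^3 ≤ 1/((n:ℝ) * Real.sqrt n) := by
    have cs := Finset.sum_mul_sq_le_sq_mul_sq (range (n+1))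
      (fun k => Real.sqrt (W p n k) * ((k:ℝ)/n - p)^2)
      (fun k => Real.sqrt (W p n k) * |(k:ℝ)/n - p|)
    have e1 : ∀ k ∈ range (n+1),
        (Real.sqrt (W p n k) * ((k:ℝ)/n - p)^2) * (Real.sqrt (W p n k) * |(k:ℝ)/n - p|)
          = W p n k * |(k:ℝ)/n - p|^3 := by
      intro k _
      rw [show (Real.sqrt (W p n k) * ((k:ℝ)/n - p)^2) * (Real.sqrt (W p n k) * |(k:ℝ)/n - p|)
          = (Real.sqrt (W p n k) * Real.sqrt (W p n k)) * (((k:ℝ)/n - p)^2 * |(k:ℝ)/n - p|) by ring,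
        Real.mul_self_sqrt (hw k), ← sq_abs, ← pow_succ]
    have e2 : ∀ k ∈ range (n+1),
        (Real.sqrt (W p n k) * ((k:ℝ)/n - p)^2)^2 = W p n k * ((k:ℝ)/n - p)^4 := by
      intro k _
      rw [mul_pow, Real.sq_sqrt (hw k), ← pow_mul]
    have e3 : ∀ k ∈ range (n+1),
        (Real.sqrt (W p n k) * |(k:ℝ)/n - p|)^2 = W p n k * ((k:ℝ)/n - p)^2 := by
      intro k _
      rw [mul_pow, Real.sq_sqrt (hw k), sq_abs]
    rw [Finset.sum_congr rfl e1, Finset.sum_congr rfl e2, Finset.sum_congr rfl e3] at cs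
    have hq : p*(1-p)/n ≤ 1/(4*n) := by
      have : p*(1-p) ≤ 1/4 := by nlinarith [sq_nonneg (1-2*p)]
      rw [div_le_div_iff₀ hn0 (by positivity)]
      nlinarith
    have hub : (∑ k ∈ range (n+1), W p n k * |(k:ℝ)/n - p|^3)^2 ≤ 1/(n:ℝ)^3 := by
      calc (∑ k ∈ range (n+1), W p n k * |(k:ℝ)/n - p|^3)^2
          ≤ (∑ k ∈ range (n+1), W p n k * ((k:ℝ)/n - p)^4)
            * ∑ k ∈ range (n+1), W p n k * ((k:ℝ)/n - p)^2 := cs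
        _ ≤ (3/n^2) * (1/(4*n)) := by
            apply mul_le_mul t4 (t2.le.trans hq) ?_ (by positivity)
            · rw [t2]; apply div_nonneg _ hn0.le; nlinarith
        _ ≤ 1/(n:ℝ)^3 := by
            rw [show (3:ℝ)/(n:ℝ)^2*(1/(4*(n:ℝ))) = 3/(4*(n:ℝ)^3) by ring,
              div_le_div_iff₀ (by positivity) (by positivity)]
            nlinarith [pow_pos hn0 3]
    have hnn : 0 ≤ ∑ k ∈ range (n+1), W p n k * |(k:ℝ)/n - p|^3 :=
      Finset.sum_nonneg fun k _ => mul_nonneg (hw k) (by positivity)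
    have heq : (1:ℝ)/(n:ℝ)^3 = (1/((n:ℝ) * Real.sqrt n))^2 := by
      rw [div_pow, one_pow, mul_pow, Real.sq_sqrt hn0.le]
      ring_nf
    rw [heq] at hub
    have hfin := Real.sqrt_le_sqrt hub
    rwa [Real.sqrt_sq hnn, Real.sqrt_sq (by positivity)] at hfin
  have decomp : (∑ k ∈ range (n+1), W p n k * ((k:ℝ) * Real.log (((k:ℝ)/n)/p))) - (1-p)/2
      = (n:ℝ) * ∑ k ∈ range (n+1), W p n k *
          (((k:ℝ)/n) * Real.log (((k:ℝ)/n)/p) - ((k:ℝ)/n - p) - ((k:ℝ)/n - p)^2/(2*p)) := by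
    have pt : ∀ k ∈ range (n+1), W p n k * ((k:ℝ) * Real.log (((k:ℝ)/n)/p))
        = (n:ℝ) * (W p n k * (((k:ℝ)/n) * Real.log (((k:ℝ)/n)/p) - ((k:ℝ)/n - p)
            - ((k:ℝ)/n - p)^2/(2*p)))
          + (n:ℝ) * (W p n k * ((k:ℝ)/n - p))
          + ((n:ℝ)/(2*p)) * (W p n k * ((k:ℝ)/n - p)^2) := by
      intro k _
      field_simp
      ring
    rw [Finset.sum_congr rfl pt, Finset.sum_add_distrib, Finset.sum_add_distrib,
      ← Finset.mul_sum, ← Finset.mul_sum, ← Finset.mul_sum, t1, t2]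
    rw [mul_zero, add_zero, show (n:ℝ)/(2*p) * (p*(1-p)/n) = (1-p)/2 by field_simp]
    ring
  rw [decomp, abs_mul, abs_of_pos hn0]
  have hC1 : (0:ℝ) ≤ (p + 1/(2*p))*(16/p^4) := by positivity
  have habs : |∑ k ∈ range (n+1), W p n k *
        (((k:ℝ)/n) * Real.log (((k:ℝ)/n)/p) - ((k:ℝ)/n - p) - ((k:ℝ)/n - p)^2/(2*p))|
      ≤ 2/p^2 * (1/((n:ℝ)*Real.sqrt n)) + ((p + 1/(2*p))*(16/p^4)) * (3/n^2) := by
    calc |∑ k ∈ range (n+1), W p n k *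
        (((k:ℝ)/n) * Real.log (((k:ℝ)/n)/p) - ((k:ℝ)/n - p) - ((k:ℝ)/n - p)^2/(2*p))|
        ≤ ∑ k ∈ range (n+1), |W p n k *
          (((k:ℝ)/n) * Real.log (((k:ℝ)/n)/p) - ((k:ℝ)/n - p) - ((k:ℝ)/n - p)^2/(2*p))| :=
        Finset.abs_sum_le_sum_abs _ _
      _ ≤ ∑ k ∈ range (n+1), W p n k *
          (2/p^2 * |(k:ℝ)/n - p|^3 + ((p + 1/(2*p))*(16/p^4)) * ((k:ℝ)/n - p)^4) := by
        apply Finset.sum_le_sum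
        intro k hk
        rw [abs_mul, abs_of_nonneg (hw k)]
        apply mul_le_mul_of_nonneg_left _ (hw k)
        apply S_bound hp hp1 (by positivity)
        rw [div_le_one hn0]
        exact_mod_cast Nat.lt_succ_iff.1 (Finset.mem_range.1 hk)
      _ = 2/p^2 * (∑ k ∈ range (n+1), W p n k * |(k:ℝ)/n - p|^3)
          + ((p + 1/(2*p))*(16/p^4)) * ∑ k ∈ range (n+1), W p n k * ((k:ℝ)/n - p)^4 := by
        rw [Finset.mul_sum, Finset.mul_sum, ← Finset.sum_add_distrib]
        exact Finset.sum_congr rfl fun k _ => by ring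
      _ ≤ 2/p^2 * (1/((n:ℝ)*Real.sqrt n)) + ((p + 1/(2*p))*(16/p^4)) * (3/n^2) :=
        add_le_add (mul_le_mul_of_nonneg_left t3 (by positivity))
          (mul_le_mul_of_nonneg_left t4 hC1)
  have hsn : (0:ℝ) < Real.sqrt n := Real.sqrt_pos.2 hn0
  calc (n:ℝ) * |∑ k ∈ range (n+1), W p n k *
        (((k:ℝ)/n) * Real.log (((k:ℝ)/n)/p) - ((k:ℝ)/n - p) - ((k:ℝ)/n - p)^2/(2*p))|
      ≤ (n:ℝ) * (2/p^2 * (1/((n:ℝ)*Real.sqrt n)) + ((p + 1/(2*p))*(16/p^4)) * (3/n^2)) :=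
      mul_le_mul_of_nonneg_left habs hn0.le
    _ = 2/p^2 * (1/Real.sqrt n) + (3*((p + 1/(2*p))*(16/p^4))) * (1/n) := by
      field_simp

private lemma keylim (p : ℝ) (hp : 0 < p) (hp1 : p ≤ 1) :
    Tendsto (fun n : ℕ => ∑ k ∈ range (n+1), W p n k * ((k:ℝ) * Real.log (((k:ℝ)/n)/p)))
      atTop (nhds ((1-p)/2)) := by
  rw [← tendsto_sub_nhds_zero_iff]
  apply squeeze_zero_norm'
    (a := fun n : ℕ => 2/p^2 * (1/Real.sqrt n) + (3*((p + 1/(2*p))*(16/p^4))) * (1/n))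
  · filter_upwards [eventually_ge_atTop 1] with n hn
    rw [Real.norm_eq_abs]
    exact key_est p hp hp1 hn
  · have h2 : Tendsto (fun n : ℕ => 1/(n:ℝ)) atTop (nhds 0) :=
      tendsto_one_div_atTop_nhds_zero_nat
    have h1 : Tendsto (fun n : ℕ => 1/Real.sqrt n) atTop (nhds 0) := by
      have hc := (Real.continuous_sqrt.tendsto 0).comp h2
      simp only [Function.comp_def, Real.sqrt_zero] at hc
      refine hc.congr fun n => ?_
      rw [one_div, one_div, Real.sqrt_inv]
    have := (h1.const_mul (2/p^2)).add (h2.const_mul (3*((p + 1/(2*p))*(16/p^4))))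
    simpa using this

/-- For i.i.d. samples from a full-support P on an alphabet of size m,
n·E[D(P̂_n‖P)] = ((m-1)/2)·log e + o(1) as n → ∞.  (Natural logarithms are used, so
log e = 1 and the limit is (m-1)/2.) -/
theorem stmt6 {α : Type*} [Fintype α] [DecidableEq α]
    (P : α → ℝ) (hpos : ∀ a, 0 < P a) (hsum : ∑ a, P a = 1)
    (m : ℕ) (hm : Fintype.card α = m) :
    Tendsto (fun n : ℕ => (n : ℝ) * expKL P n) atTop
      (nhds (((m : ℝ) - 1) / 2)) := by
  have hple : ∀ a, P a ≤ 1 := by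
    intro a
    have h := Finset.single_le_sum (f := P) (fun b _ => (hpos b).le) (Finset.mem_univ a)
    rw [hsum] at h
    exact h
  have inner : ∀ n : ℕ, 1 ≤ n → (n:ℝ) * expKL P n
      = ∑ a : α, ∑ k ∈ range (n+1), W (P a) n k * ((k:ℝ) * Real.log (((k:ℝ)/n)/(P a))) := by
    intro n hn
    have hne : (n:ℝ) ≠ 0 := Nat.cast_ne_zero.2 (by omega)
    unfold expKL klDiv'
    rw [Finset.mul_sum]
    have step : ∀ x : Fin n → α,
        (n:ℝ) * ((∏ i, P (x i)) * ∑ a, empDist n x a * Real.log (empDist n x a / P a))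
        = ∑ a, (∏ i, P (x i)) * ((((univ.filter fun i => x i = a).card : ℝ))
            * Real.log (((((univ.filter fun i => x i = a).card : ℝ))/n)/(P a))) := by
      intro x
      rw [show (∏ i, P (x i)) * ∑ a, empDist n x a * Real.log (empDist n x a / P a)
          = ∑ a, (∏ i, P (x i)) * (empDist n x a * Real.log (empDist n x a / P a)) from
        Finset.mul_sum _ _ _, Finset.mul_sum]
      refine Finset.sum_congr rfl fun a _ => ?_
      unfold empDist
      rw [show (n:ℝ) * ((∏ i, P (x i)) * ((((univ.filter fun i => x i = a).card : ℝ)/n)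
          * Real.log ((((univ.filter fun i => x i = a).card : ℝ)/n) / P a)))
        = ((n:ℝ) * (((univ.filter fun i => x i = a).card : ℝ)/n)) * ((∏ i, P (x i))
          * Real.log ((((univ.filter fun i => x i = a).card : ℝ)/n) / P a)) from by ring]
      rw [mul_div_cancel₀ _ hne]
      ring
    rw [Finset.sum_congr rfl (fun x _ => step x), Finset.sum_comm]
    refine Finset.sum_congr rfl fun a _ => ?_
    rw [margin P hsum a n (fun k => (k:ℝ) * Real.log (((k:ℝ)/n)/(P a)))]
    refine Finset.sum_congr rfl fun k _ => ?_
    unfold W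
    ring
  have hlim : Tendsto (fun n : ℕ => ∑ a : α,
      ∑ k ∈ range (n+1), W (P a) n k * ((k:ℝ) * Real.log (((k:ℝ)/n)/(P a)))) atTop
      (nhds (∑ a : α, (1 - P a)/2)) :=
    tendsto_finset_sum _ fun a _ => keylim (P a) (hpos a) (hple a)
  have hval : ∑ a : α, (1 - P a)/2 = ((m:ℝ) - 1)/2 := by
    rw [← Finset.sum_div, Finset.sum_sub_distrib, Finset.sum_const, Finset.card_univ, hsum, hm]
    simp
  rw [← hval]
  apply hlim.congr'
  filter_upwards [eventually_ge_atTop 1] with n hn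
  exact (inner n hn).symm
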